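/- Let A_f, B_f, A_g, B_g > 0 and define ψ(x) = B_f / (1 - A_f(x - B_g)) and φ(x) = B_g / (1 - A_g x). Then for every k ∈ ℕ one has ψ^{(k)}(B_g) = B_f A_f^k k! and φ^{(k)}(0) = B_g A_g^k k!, and for every n ≥ 1 one has (ψ ∘ φ)^{(n)}(0) = (A_f B_f B_g / (1 + A_f B_g)) · (A_g(1 + A_f B_g))^n · n!. -/

import Mathlib

open Real Set Topology Filter

lemma aux_rat (c a b : ℝ) : ∀ (k : ℕ) (x : ℝ), 1 - a * (x - b) ≠ 0 →
    iteratedDeriv k (fun y : ℝ => c / (1 - a * (y - b))) x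
      = c * a ^ k * k.factorial / (1 - a * (x - b)) ^ (k + 1) := by
  intro k
  induction k with
  | zero => intro x hx; simp [iteratedDeriv_zero]
  | succ k ih =>
    intro x hx
    rw [iteratedDeriv_succ]
    have hopen : IsOpen {y : ℝ | 1 - a * (y - b) ≠ 0} := by
      have : Continuous fun y : ℝ => 1 - a * (y - b) := by continuity
      exact isOpen_ne.preimage this
    have hev : iteratedDeriv k (fun y : ℝ => c / (1 - a * (y - b)))
        =ᶠ[𝓝 x] fun y => c * a ^ k * k.factorial / (1 - a * (y - b)) ^ (k + 1) := by
      filter_upwards [hopen.mem_nhds hx] with y hy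
      exact ih y hy
    rw [hev.deriv_eq]
    have hu : HasDerivAt (fun y : ℝ => 1 - a * (y - b)) (-a) x := by
      simpa using (((hasDerivAt_id x).sub_const b).const_mul a).const_sub 1
    have hpow : HasDerivAt (fun y : ℝ => (1 - a * (y - b)) ^ (k + 1))
        ((k + 1 : ℕ) * (1 - a * (x - b)) ^ k * (-a)) x := hu.pow (k + 1)
    have hne : (1 - a * (x - b)) ^ (k + 1) ≠ 0 := pow_ne_zero _ hx
    have hinv := hpow.inv hne
    have hfin := hinv.const_mul (c * a ^ k * k.factorial)
    have : HasDerivAt (fun y => c * a ^ k * k.factorial / (1 - a * (y - b)) ^ (k + 1))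
        (c * a ^ k * k.factorial *
          (-(↑(k + 1) * (1 - a * (x - b)) ^ k * -a) / ((1 - a * (x - b)) ^ (k + 1)) ^ 2)) x := by
      simpa [div_eq_mul_inv] using hfin
    rw [this.deriv, Nat.factorial_succ]
    push_cast
    field_simp
    ring

lemma ev_iter_eq {f g : ℝ → ℝ} {x : ℝ} (n : ℕ) (h : f =ᶠ[𝓝 x] g) :
    iteratedDeriv n f x = iteratedDeriv n g x := h.iteratedDeriv_eq n

theorem stmt4 (Af Bf Ag Bg : ℝ) (hAf : 0 < Af) (hBf : 0 < Bf) (hAg : 0 < Ag) (hBg : 0 < Bg) :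
    (∀ k : ℕ,
      iteratedDeriv k (fun x : ℝ => Bf / (1 - Af * (x - Bg))) Bg = Bf * Af ^ k * k.factorial) ∧
    (∀ k : ℕ,
      iteratedDeriv k (fun x : ℝ => Bg / (1 - Ag * x)) 0 = Bg * Ag ^ k * k.factorial) ∧
    (∀ n : ℕ, 1 ≤ n →
      iteratedDeriv n
          ((fun x : ℝ => Bf / (1 - Af * (x - Bg))) ∘ (fun x : ℝ => Bg / (1 - Ag * x))) 0 =
        (Af * Bf * Bg / (1 + Af * Bg)) * (Ag * (1 + Af * Bg)) ^ n * n.factorial) := by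
  have h1AB : (0:ℝ) < 1 + Af * Bg := by positivity
  refine ⟨?_, ?_, ?_⟩
  · intro k
    have := aux_rat Bf Af Bg k Bg (by simp)
    simpa using this
  · intro k
    have := aux_rat Bg Ag 0 k 0 (by simp)
    simp only [sub_zero] at this
    simpa using this
  · intro n hn
    set C : ℝ := Ag * (1 + Af * Bg) with hC
    set α : ℝ := Bf / (1 + Af * Bg) with hα
    set β : ℝ := Af * Bf * Bg / (1 + Af * Bg) with hβ
    -- eventual equality near 0
    have hopen : IsOpen {x : ℝ | 1 - Ag * x ≠ 0 ∧ 1 - C * x ≠ 0} := by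
      apply IsOpen.inter
      · exact isOpen_ne.preimage (by continuity)
      · exact isOpen_ne.preimage (by continuity)
    have h0 : (0:ℝ) ∈ {x : ℝ | 1 - Ag * x ≠ 0 ∧ 1 - C * x ≠ 0} := by
      constructor <;> simp
    have hev : ((fun x : ℝ => Bf / (1 - Af * (x - Bg))) ∘ (fun x : ℝ => Bg / (1 - Ag * x)))
        =ᶠ[𝓝 (0:ℝ)] fun x => α + β / (1 - C * (x - 0)) := by
      filter_upwards [hopen.mem_nhds h0] with x hx
      obtain ⟨hx1, hx2⟩ := hx
      simp only [Function.comp_apply, sub_zero]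
      have hD : 1 - Af * (Bg / (1 - Ag * x) - Bg) = (1 - C * x) / (1 - Ag * x) := by
        field_simp [hC]
        ring
      rw [hD, div_div_eq_mul_div]
      rw [hα, hβ, hC]
      rw [hC] at hx2
      have h3 : (1 + Af * Bg) ≠ 0 := h1AB.ne'
      rw [div_div, div_add_div _ _ h3 (mul_ne_zero h3 hx2), div_eq_div_iff hx2 (mul_ne_zero h3 (mul_ne_zero h3 hx2))]
      ring
    rw [ev_iter_eq n hev]
    have hconst : iteratedDeriv n (fun x : ℝ => α + β / (1 - C * (x - 0))) 0
        = iteratedDeriv n (fun x : ℝ => β / (1 - C * (x - 0))) 0 := by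
      simp only [← iteratedDerivWithin_univ]
      exact iteratedDerivWithin_const_add hn α
    rw [hconst]
    have := aux_rat β C 0 n 0 (by simp)
    rw [this]
    have hCne : (1 : ℝ) - C * ((0:ℝ) - 0) = 1 := by ring
    rw [hCne, one_pow, div_one, hβ, hC]
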